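/- Suppose Cay(ℤ₂ₖ; a, b, b+k) has a hamiltonian circuit, gcd(a−b, k) = 1, gcd(a, 2k) ≠ 1, and gcd(b, k) ≠ 1. Then in the hamiltonian circuit, exactly k vertices travel by a and k vertices travel by b or b+k. -/

import Mathlib

lemma gcd_one_of_zmod_unit {n : ℕ} (hn : n ≠ 0) (x : ℤ) (c : ZMod n)
    (h : c * (x : ZMod n) = 1) : Int.gcd x n = 1 := by
  haveI : NeZero n := ⟨hn⟩
  rw [← Int.isCoprime_iff_gcd_eq_one]
  have hc : ((c.val : ℕ) : ZMod n) = c := ZMod.natCast_rightInverse c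
  have : (((c.val : ℤ) * x - 1 : ℤ) : ZMod n) = 0 := by
    push_cast
    rw [hc, h]
    ring
  rw [ZMod.intCast_zmod_eq_zero_iff_dvd] at this
  obtain ⟨q, hq⟩ := this
  exact ⟨(c.val : ℤ), -q, by linarith⟩

/-- Suppose `Cay(ℤ₂ₖ; a, b, b+k)` has a hamiltonian circuit `σ`,
`gcd(a−b, k) = 1`, `gcd(a, 2k) ≠ 1` and `gcd(b, k) ≠ 1`. Then exactly `k` vertices
travel by `a` and `k` vertices travel by `b` or `b+k`. -/
theorem half_travel_by_a (k : ℕ) (hk : 1 ≤ k) (a b : ℤ)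
    (σ : Equiv.Perm (ZMod (2 * k)))
    (harc : ∀ v : ZMod (2 * k), σ v - v ∈
      ({(a : ZMod (2 * k)), (b : ZMod (2 * k)),
        (b : ZMod (2 * k)) + ((k : ℕ) : ZMod (2 * k))} : Set (ZMod (2 * k))))
    (hcyc : ∀ v w : ZMod (2 * k), ∃ i : ℕ, (σ ^ i) v = w)
    (h1 : Int.gcd (a - b) (k : ℤ) = 1)
    (h2 : Int.gcd a ((2 * k : ℕ) : ℤ) ≠ 1)
    (h3 : Int.gcd b (k : ℤ) ≠ 1) :
    Nat.card {v : ZMod (2 * k) // σ v - v = (a : ZMod (2 * k))} = k ∧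
    Nat.card {v : ZMod (2 * k) // σ v - v = (b : ZMod (2 * k)) ∨
      σ v - v = (b : ZMod (2 * k)) + ((k : ℕ) : ZMod (2 * k))} = k := by
  haveI : NeZero (2 * k) := ⟨by omega⟩
  haveI : NeZero k := ⟨by omega⟩
  -- k ≥ 2
  have hk2 : 2 ≤ k := by
    by_contra h
    have : k = 1 := by omega
    subst this
    exact h3 (by simp [Int.gcd])
  -- a ≢ b and a ≢ b + k mod 2k
  have hknd : ¬ ((k : ℤ) ∣ a - b) := by
    intro hd
    have : (k : ℕ) ∣ Int.gcd (a - b) (k : ℤ) :=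
      Nat.dvd_gcd (Int.natAbs_dvd_natAbs.mpr (by simpa using hd)) (by simp)
    rw [h1] at this
    have := Nat.le_of_dvd one_pos this
    omega
  have hne1 : (a : ZMod (2 * k)) ≠ (b : ZMod (2 * k)) := by
    intro h
    rw [ZMod.intCast_eq_intCast_iff'] at h
    apply hknd
    have : ((2 * k : ℕ) : ℤ) ∣ a - b := Int.ModEq.dvd h.symm
    exact dvd_trans (by push_cast; exact ⟨2, by ring⟩) this
  have hne2 : (a : ZMod (2 * k)) ≠ (b : ZMod (2 * k)) + ((k : ℕ) : ZMod (2 * k)) := by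
    intro h
    have h' : ((a - b - k : ℤ) : ZMod (2 * k)) = 0 := by
      push_cast
      rw [h]
      ring
    rw [ZMod.intCast_zmod_eq_zero_iff_dvd] at h'
    apply hknd
    have h2d : (k : ℤ) ∣ a - b - k :=
      dvd_trans (by push_cast; exact ⟨2, by ring⟩) h'
    have := dvd_add h2d (dvd_refl (k : ℤ))
    simpa using this
  classical
  set p := fun v : ZMod (2 * k) => σ v - v = (a : ZMod (2 * k)) with hp
  set r := (Finset.univ.filter p).card with hr
  set s := (Finset.univ.filter (fun v => ¬ p v)).card with hs
  have hcardZ : Fintype.card (ZMod (2 * k)) = 2 * k := ZMod.card _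
  have hrs : r + s = 2 * k := by
    rw [hr, hs, Finset.card_filter_add_card_filter_not, Finset.card_univ, hcardZ]
  have hq : ∀ v, ¬ p v ↔ (σ v - v = (b : ZMod (2 * k)) ∨
      σ v - v = (b : ZMod (2 * k)) + ((k : ℕ) : ZMod (2 * k))) := by
    intro v
    constructor
    · intro hnp
      rcases harc v with h | h | h
      · exact absurd h hnp
      · exact Or.inl h
      · exact Or.inr h
    · rintro (h | h) hpv
      · exact hne1 (hpv ▸ h ▸ rfl)
      · exact hne2 (hpv ▸ h ▸ rfl)
  -- cast hom to ZMod k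
  have hdvd : k ∣ 2 * k := ⟨2, by ring⟩
  set φ : ZMod (2 * k) →+* ZMod k := ZMod.castHom hdvd (ZMod k) with hφ
  -- sum is zero
  have hsum0 : ∑ v : ZMod (2 * k), φ (σ v - v) = 0 := by
    simp only [map_sub]
    rw [Finset.sum_sub_distrib]
    rw [Equiv.sum_comp σ (fun v => φ v)]
    ring
  have hφa : ∀ v, p v → φ (σ v - v) = ((a : ℤ) : ZMod k) := by
    intro v hv
    rw [hv]
    simp [hφ]
  have hφb : ∀ v, ¬ p v → φ (σ v - v) = ((b : ℤ) : ZMod k) := by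
    intro v hv
    rcases (hq v).mp hv with h | h
    · rw [h]; simp [hφ]
    · rw [h, map_add, map_intCast, map_natCast, ZMod.natCast_self, add_zero]
  have hsum : (r : ZMod k) * ((a : ℤ) : ZMod k) + (s : ZMod k) * ((b : ℤ) : ZMod k) = 0 := by
    have := hsum0
    rw [← Finset.sum_filter_add_sum_filter_not Finset.univ p] at this
    rw [Finset.sum_congr rfl (fun v hv => hφa v (Finset.mem_filter.mp hv).2)] at this
    rw [Finset.sum_congr rfl (fun v hv => hφb v (Finset.mem_filter.mp hv).2)] at this
    simpa [Finset.sum_const, nsmul_eq_mul] using this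
  -- s ≡ -r mod k
  have hsval : (s : ZMod k) = -(r : ZMod k) := by
    have : ((r + s : ℕ) : ZMod k) = 0 := by
      rw [hrs]
      simp [Nat.cast_mul, ZMod.natCast_self]
    push_cast at this
    linear_combination this
  have habunit : IsUnit (((a - b : ℤ)) : ZMod k) := by
    obtain ⟨u, v, huv⟩ := Int.isCoprime_iff_gcd_eq_one.mpr h1
    refine IsUnit.of_mul_eq_one ((u : ZMod k)) ?_
    have h1' : ((u * (a - b) + v * (k : ℤ) : ℤ) : ZMod k) = 1 := by rw [huv]; norm_num
    push_cast at h1'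
    rw [ZMod.natCast_self] at h1'
    push_cast
    linear_combination h1'
  have hkr : k ∣ r := by
    have hthis : (r : ZMod k) * (((a - b : ℤ)) : ZMod k) = 0 := by
      push_cast
      rw [hsval] at hsum
      linear_combination hsum
    have hr0 : (r : ZMod k) = 0 := by
      rw [mul_comm] at hthis
      exact (IsUnit.mul_right_eq_zero habunit).mp hthis
    exact (ZMod.natCast_eq_zero_iff _ _).mp hr0
  have hrle : r ≤ 2 * k := by
    calc r ≤ Finset.univ.card := Finset.card_filter_le _ _
      _ = 2 * k := by rw [Finset.card_univ, hcardZ]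
  -- rule out r = 2k
  have hrne2k : r ≠ 2 * k := by
    intro hr2k
    have hall : ∀ v, p v := by
      intro v
      have huniv : Finset.univ.filter p = Finset.univ := by
        apply Finset.eq_univ_of_card
        rw [← hr, hr2k, hcardZ]
      have hv : v ∈ Finset.univ.filter p := by rw [huniv]; exact Finset.mem_univ v
      exact (Finset.mem_filter.mp hv).2
    have hiter : ∀ i : ℕ, (σ ^ i) 0 = (i : ZMod (2 * k)) * (a : ZMod (2 * k)) := by
      intro i
      induction i with
      | zero => simp
      | succ n ih =>
        rw [pow_succ', Equiv.Perm.mul_apply, ih]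
        have hthis := hall ((n : ZMod (2 * k)) * (a : ZMod (2 * k)))
        rw [hp] at hthis
        push_cast
        linear_combination hthis
    obtain ⟨i, hi⟩ := hcyc 0 1
    rw [hiter] at hi
    exact h2 (by
      have := gcd_one_of_zmod_unit (n := 2 * k) (by omega) a (i : ZMod (2 * k)) hi
      simpa using this)
  -- rule out r = 0
  have hrne0 : r ≠ 0 := by
    intro hr0
    have hnone : ∀ v, ¬ p v := by
      intro v hv
      have hmem : v ∈ Finset.univ.filter p := Finset.mem_filter.mpr ⟨Finset.mem_univ v, hv⟩
      rw [Finset.card_eq_zero.mp hr0] at hmem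
      exact absurd hmem (Finset.notMem_empty v)
    have hstep : ∀ v, φ (σ v) = φ v + ((b : ℤ) : ZMod k) := by
      intro v
      have := hφb v (hnone v)
      rw [map_sub] at this
      linear_combination this
    have hiter : ∀ i : ℕ, φ ((σ ^ i) 0) = (i : ZMod k) * ((b : ℤ) : ZMod k) := by
      intro i
      induction i with
      | zero => simp
      | succ n ih =>
        rw [pow_succ', Equiv.Perm.mul_apply, hstep, ih]
        push_cast
        ring
    obtain ⟨i, hi⟩ := hcyc 0 1
    have : (i : ZMod k) * ((b : ℤ) : ZMod k) = 1 := by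
      rw [← hiter i, hi, map_one]
    exact h3 (gcd_one_of_zmod_unit (n := k) (by omega) b (i : ZMod k) this)
  have hrk : r = k := by
    rcases hkr with ⟨c, hc⟩
    have hc2 : c ≤ 2 := by
      by_contra hcc
      push_neg at hcc
      have : 3 * k ≤ k * c := by
        calc 3 * k = k * 3 := by ring
          _ ≤ k * c := Nat.mul_le_mul_left k hcc
      omega
    interval_cases c <;> omega
  have hsk : s = k := by omega
  constructor
  · rw [Nat.card_eq_fintype_card, Fintype.card_subtype, ← hr, hrk]
  · rw [Nat.card_eq_fintype_card, Fintype.card_subtype]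
    rw [show (Finset.univ.filter fun v => σ v - v = (b : ZMod (2*k)) ∨
        σ v - v = (b : ZMod (2*k)) + ((k:ℕ) : ZMod (2*k))) =
        Finset.univ.filter (fun v => ¬ p v) from
      Finset.filter_congr (fun v _ => by rw [hq v])]
    rw [← hs, hsk]
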